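/- Let A ∈ ℝ^{m×n}, p ∈ ℝ^m, u ∈ ℝ^n, λ > 0, α ∈ ℝ, and let S ⊆ {1,…,m}. Form the augmented matrix Ã = [I_m √(2λ)A] with rows ã_i and right-hand side p̃ = √(2λ)(p − Au), and assume all counts of nonzero column entries appearing below are nonzero. Then the BICAV update applied to (Ã, p̃) at x̃ = (y, z), namely x̃_j⁺ = x̃_j + α (Σ_{i∈S} ((p̃_i − Σ_k ã_{ik} x̃_k)/(Σ_k ã_{ik}²)) ã_{ij}) / (Σ_{i∈S} 1{ã_{ij} ≠ 0}), expressed in the variables y and x = z + u, equals: y_i⁺ = y_i + α (√(2λ)p_i − √(2λ)(Ax)_i − y_i)/(2λΣ_k a_{ik}² + 1) for i ∈ S (with y_i unchanged for i ∉ S), and x_j⁺ = x_j + α (Σ_{i∈S} ((√(2λ)p_i − √(2λ)(Ax)_i − y_i)/(2λΣ_k a_{ik}² + 1)) √(2λ)a_{ij}) / (Σ_{i∈S} 1{a_{ij} ≠ 0}) for j = 1,…,n. -/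
import Mathlib


open Finset

/-- The augmented matrix `Ã = [I_m  √(2λ)A] ∈ ℝ^{m×(m+n)}`. -/
noncomputable def bicavAugMatrix {m n : ℕ} (A : Matrix (Fin m) (Fin n) ℝ) (lam : ℝ) :
    Matrix (Fin m) (Fin m ⊕ Fin n) ℝ :=
  fun i => Sum.elim (fun k => if i = k then (1 : ℝ) else 0)
    (fun j => Real.sqrt (2 * lam) * A i j)

/-- The augmented right-hand side `p̃ = √(2λ)(p − Au)`. -/
noncomputable def bicavAugRhs {m n : ℕ} (A : Matrix (Fin m) (Fin n) ℝ)
    (p : Fin m → ℝ) (u : Fin n → ℝ) (lam : ℝ) : Fin m → ℝ :=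
  fun i => Real.sqrt (2 * lam) * (p i - A.mulVec u i)

/-- One BICAV update with subset `S` and relaxation `α` applied to the system `(B, q)`:
`x_j⁺ = x_j + α (Σ_{i∈S} ((q_i − Σ_k b_{ik}x_k)/(Σ_k b_{ik}²)) b_{ij}) / (Σ_{i∈S} 1{b_{ij} ≠ 0})`. -/
noncomputable def bicavStep {m : ℕ} {ι : Type*} [Fintype ι]
    (B : Matrix (Fin m) ι ℝ) (q : Fin m → ℝ) (S : Finset (Fin m)) (α : ℝ)
    (x : ι → ℝ) : ι → ℝ :=
  fun j => x j +
    α * (∑ i ∈ S, ((q i - ∑ k, B i k * x k) / (∑ k, (B i k) ^ 2)) * B i j) /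
      (∑ i ∈ S, if B i j ≠ 0 then (1 : ℝ) else 0)

/-- The BICAV update applied to the augmented system
`[I √(2λ)A]·(y, z) = √(2λ)(p − Au)` at `x̃ = (y, z)` with `z = x − u`, expressed in the
variables `y` and `x = z + u`, gives the stated BICAV proximal update formulas. -/
theorem bicav_prox_update
    (m n : ℕ) (A : Matrix (Fin m) (Fin n) ℝ) (p : Fin m → ℝ) (u : Fin n → ℝ)
    (lam α : ℝ) (hlam : 0 < lam) (S : Finset (Fin m))
    (hcount : ∀ j : Fin n,
      (∑ i ∈ S, if bicavAugMatrix A lam i (Sum.inr j) ≠ 0 then (1 : ℝ) else 0) ≠ 0)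
    (y : Fin m → ℝ) (x : Fin n → ℝ) :
    (∀ i ∈ S,
        bicavStep (bicavAugMatrix A lam) (bicavAugRhs A p u lam) S α
            (Sum.elim y (fun j => x j - u j)) (Sum.inl i) =
          y i + α * (Real.sqrt (2 * lam) * p i - Real.sqrt (2 * lam) * A.mulVec x i - y i) /
            (2 * lam * (∑ k, (A i k) ^ 2) + 1)) ∧
    (∀ i ∉ S,
        bicavStep (bicavAugMatrix A lam) (bicavAugRhs A p u lam) S α
            (Sum.elim y (fun j => x j - u j)) (Sum.inl i) = y i) ∧
    (∀ j : Fin n,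
        bicavStep (bicavAugMatrix A lam) (bicavAugRhs A p u lam) S α
            (Sum.elim y (fun j => x j - u j)) (Sum.inr j) + u j =
          x j + α * (∑ i ∈ S,
              ((Real.sqrt (2 * lam) * p i - Real.sqrt (2 * lam) * A.mulVec x i - y i) /
                  (2 * lam * (∑ k, (A i k) ^ 2) + 1)) *
                (Real.sqrt (2 * lam) * A i j)) /
            (∑ i ∈ S, if A i j ≠ 0 then (1 : ℝ) else 0)) := by

  have h2l : (0:ℝ) < 2 * lam := by linarith
  have hs : Real.sqrt (2 * lam) ^ 2 = 2 * lam := Real.sq_sqrt h2l.le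
  have hsne : Real.sqrt (2 * lam) ≠ 0 := by positivity
  set s := Real.sqrt (2 * lam) with hsdef
  set B := bicavAugMatrix A lam with hB
  set q := bicavAugRhs A p u lam with hq
  set xt : Fin m ⊕ Fin n → ℝ := Sum.elim y (fun j => x j - u j) with hxt
  have hBl : ∀ i k : Fin m, B i (Sum.inl k) = if i = k then (1:ℝ) else 0 := by
    intro i k; simp [hB, bicavAugMatrix]
  have hBr : ∀ (i : Fin m) (j : Fin n), B i (Sum.inr j) = s * A i j := by
    intro i j; simp [hB, bicavAugMatrix, hsdef]
  have hres : ∀ i : Fin m,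
      q i - ∑ k, B i k * xt k = s * p i - s * A.mulVec x i - y i := by
    intro i
    simp only [hq, bicavAugRhs, Fintype.sum_sum_type, hBl, hBr, hxt, Sum.elim_inl,
      Sum.elim_inr, ite_mul, one_mul, zero_mul, Finset.sum_ite_eq,
      Finset.mem_univ, if_true, ← hsdef, Matrix.mulVec, dotProduct]
    simp only [mul_sub, Finset.sum_sub_distrib, Finset.mul_sum, mul_assoc]
    ring
  have hnorm : ∀ i : Fin m,
      (∑ k, (B i k) ^ 2) = 2 * lam * (∑ k, (A i k) ^ 2) + 1 := by
    intro i
    have hsq : ∀ k : Fin m, (if i = k then (1:ℝ) else 0) ^ 2 = if i = k then 1 else 0 :=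
      fun k => by split <;> norm_num
    simp only [Fintype.sum_sum_type, hBl, hBr, mul_pow, hs, hsq, Finset.sum_ite_eq,
      Finset.mem_univ, if_true]
    rw [Finset.mul_sum]
    ring
  refine ⟨?_, ?_, ?_⟩
  · intro i hi
    simp only [bicavStep]
    rw [show xt (Sum.inl i) = y i from rfl]
    have h1 : (∑ i' ∈ S, ((q i' - ∑ k, B i' k * xt k) / (∑ k, (B i' k) ^ 2)) * B i' (Sum.inl i))
        = (s * p i - s * A.mulVec x i - y i) / (2 * lam * (∑ k, (A i k) ^ 2) + 1) := by
      rw [Finset.sum_eq_single i]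
      · rw [hres i, hnorm i, hBl]; simp
      · intro b _ hbi; rw [hBl]; simp [hbi]
      · intro h; exact absurd hi h
    have h2 : (∑ i' ∈ S, if B i' (Sum.inl i) ≠ 0 then (1:ℝ) else 0) = 1 := by
      rw [Finset.sum_eq_single i]
      · rw [hBl]; simp
      · intro b _ hbi; rw [hBl]; simp [hbi]
      · intro h; exact absurd hi h
    rw [h1, h2, div_one, mul_div_assoc]
  · intro i hi
    simp only [bicavStep]
    rw [show xt (Sum.inl i) = y i from rfl]
    have h1 : (∑ i' ∈ S, ((q i' - ∑ k, B i' k * xt k) / (∑ k, (B i' k) ^ 2)) * B i' (Sum.inl i))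
        = 0 := by
      apply Finset.sum_eq_zero
      intro b hb
      have hbi : b ≠ i := fun h => hi (h ▸ hb)
      rw [hBl]; simp [hbi]
    rw [h1]
    simp
  · intro j
    simp only [bicavStep]
    rw [show xt (Sum.inr j) = x j - u j from rfl]
    have h1 : ∀ i ∈ S, ((q i - ∑ k, B i k * xt k) / (∑ k, (B i k) ^ 2)) * B i (Sum.inr j)
        = ((s * p i - s * A.mulVec x i - y i) / (2 * lam * (∑ k, (A i k) ^ 2) + 1)) *
            (s * A i j) := by
      intro i _
      rw [hres i, hnorm i, hBr]
    have h2 : (∑ i ∈ S, if B i (Sum.inr j) ≠ 0 then (1:ℝ) else 0)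
        = ∑ i ∈ S, if A i j ≠ 0 then (1:ℝ) else 0 := by
      apply Finset.sum_congr rfl
      intro i _
      rw [hBr]; simp [hsne]
    rw [Finset.sum_congr rfl h1, h2]
    ring
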